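/- arXiv:2202.01298 — 2 statements merged into one kernel-verified Lean document; each statement's English description precedes it below -/
import Mathlib

section
/- Let K be a Hermitian noncommutative kernel on Ω ⊆ V_nc with values in L(A_nc, L(Y)_nc). Then K is decomposable (K = K₊ − K₋ with K₊, K₋ completely positive nc kernels) if and only if there exist completely positive nc kernels L₁ and L₂ on Ω with values in L(A_nc, L(Y)_nc) such that the 2×2-block kernel 𝕂(Z,W)(P) = [[L₁(Z,W)(P), K(Z,W)(P)], [K(Z,W)(P), L₂(Z,W)(P)]], with values in L(A_nc, L(Y ⊕ Y)_nc), is a completely positive nc kernel. -/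
open scoped ComplexOrder Matrix

noncomputable section

namespace NCK

/-! ## Actions of scalar complex matrices on matrices over a `ℂ`-module -/

/-- Left action `α · Z` of a complex scalar matrix on a matrix over a `ℂ`-module. -/
def cMul {p q r : Type*} [Fintype q] {M : Type*} [AddCommMonoid M] [Module ℂ M]
    (α : Matrix p q ℂ) (Z : Matrix q r M) : Matrix p r M :=
  Matrix.of fun i k => ∑ j, α i j • Z j k

/-- Right action `Z · α` of a complex scalar matrix on a matrix over a `ℂ`-module. -/
def mulC {p q r : Type*} [Fintype q] {M : Type*} [AddCommMonoid M] [Module ℂ M]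
    (Z : Matrix p q M) (α : Matrix q r ℂ) : Matrix p r M :=
  Matrix.of fun i k => ∑ j, α j k • Z i j

/-- The sandwich `α · P · βᴴ`. -/
def sandwich {p q p' q' : Type*} [Fintype p] [Fintype q] {M : Type*} [AddCommMonoid M]
    [Module ℂ M] (α : Matrix p' p ℂ) (P : Matrix p q M) (β : Matrix q' q ℂ) :
    Matrix p' q' M :=
  mulC (cMul α P) βᴴ

/-- A scalar complex matrix viewed as a matrix over the algebra `A`, i.e. `α ⊗ 1_A`. -/
def matC {p q : Type*} (A : Type*) [Semiring A] [Algebra ℂ A] (α : Matrix p q ℂ) :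
    Matrix p q A :=
  α.map (algebraMap ℂ A)

/-! ## Positivity and norm bounds for matrices over `*`-rings and for operator matrices -/

/-- Positivity of a square matrix over a `*`-ring, via factorization `Q = Cᴴ * C`
(the standard characterization of positivity in a matrix `C⋆`-algebra). -/
def MatPos {n : Type*} [Fintype n] {R : Type*} [NonUnitalSemiring R] [StarRing R]
    (Q : Matrix n n R) : Prop :=
  ∃ C : Matrix n n R, Q = Cᴴ * C

/-- `‖Q‖ ≤ c` for a matrix over a unital `*`-algebra, expressed as positivity of
`c² • 1 - Qᴴ * Q`. -/
def MatNormLe {n : Type*} [Fintype n] [DecidableEq n] {R : Type*} [Ring R] [StarRing R]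
    [Algebra ℂ R] (Q : Matrix n n R) (c : ℝ) : Prop :=
  MatPos ((((c : ℂ) ^ 2) • (1 : Matrix n n R)) - Qᴴ * Q)

/-- Positivity of an element of a `C⋆`-algebra, via factorization `x = (star c) * c`. -/
def elemPos {R : Type*} [Mul R] [Star R] (x : R) : Prop :=
  ∃ c : R, x = star c * c

variable {Y : Type*} [NormedAddCommGroup Y] [InnerProductSpace ℂ Y]

/-- Positivity of a square matrix of Hilbert-space operators, via the quadratic form. -/
def OpMatPos {n : Type*} [Fintype n] (T : Matrix n n (Y →L[ℂ] Y)) : Prop :=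
  ∀ y : n → Y, 0 ≤ ∑ i, ∑ j, (inner ℂ (y i) (T i j (y j)) : ℂ)

/-- Positivity of a doubly indexed (block) matrix of Hilbert-space operators. -/
def OpMatPos2 {k n : Type*} [Fintype k] [Fintype n]
    (T : Matrix k k (Matrix n n (Y →L[ℂ] Y))) : Prop :=
  ∀ y : k → n → Y, 0 ≤ ∑ i, ∑ j, ∑ a, ∑ b, (inner ℂ (y i a) (T i j a b (y j b)) : ℂ)

/-- `‖T‖ ≤ c` for a matrix of Hilbert-space operators. -/
def OpMatNormLe {p q : Type*} [Fintype p] [Fintype q]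
    (T : Matrix p q (Y →L[ℂ] Y)) (c : ℝ) : Prop :=
  ∀ y : q → Y, ∑ i, ‖∑ j, T i j (y j)‖ ^ 2 ≤ c ^ 2 * ∑ j, ‖y j‖ ^ 2

/-- `‖T‖ ≤ c` for a doubly indexed (block) matrix of Hilbert-space operators. -/
def OpMatNormLe2 {k n : Type*} [Fintype k] [Fintype n]
    (T : Matrix k k (Matrix n n (Y →L[ℂ] Y))) (c : ℝ) : Prop :=
  ∀ y : k → n → Y,
    ∑ i, ∑ a, ‖∑ j, ∑ b, T i j a b (y j b)‖ ^ 2 ≤ c ^ 2 * ∑ j, ∑ b, ‖y j b‖ ^ 2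

/-! ## Completely positive / completely bounded / bimodule maps on matrix algebras -/

/-- A map `φ : A^{ι×ι} → L(Y)^{ι×ι} (≅ L(Y^ι))` is completely positive if all its matrix
amplifications map positive elements to positive elements. -/
def IsCPMap {A : Type*} [NonUnitalSemiring A] [StarRing A] {ι : Type*} [Fintype ι]
    (φ : Matrix ι ι A → Matrix ι ι (Y →L[ℂ] Y)) : Prop :=
  ∀ (k : ℕ) (Q : Matrix (Fin k) (Fin k) (Matrix ι ι A)),
    MatPos Q → OpMatPos2 (Matrix.of fun i j => φ (Q i j))

/-- A map `φ : A^{ι×ι} → L(Y)^{ι×ι} (≅ L(Y^ι))` is completely bounded if the norms of its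
matrix amplifications are uniformly bounded. -/
def IsCBMap {A : Type*} [Ring A] [StarRing A] [Algebra ℂ A] {ι : Type*} [Fintype ι]
    [DecidableEq ι] (φ : Matrix ι ι A → Matrix ι ι (Y →L[ℂ] Y)) : Prop :=
  ∃ c : ℝ, ∀ (k : ℕ) (Q : Matrix (Fin k) (Fin k) (Matrix ι ι A)),
    MatNormLe Q 1 → OpMatNormLe2 (Matrix.of fun i j => φ (Q i j)) c

/-- `φ` is an `(S, S^*)`-bimodule map: `φ (α · P · β^*) = L_α (φ P) L_{β^*}` for `α, β ∈ S`. -/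
def IsBimod {ι : Type*} [Fintype ι] {A B : Type*} [AddCommMonoid A] [Module ℂ A]
    [AddCommMonoid B] [Module ℂ B] (S : Set (Matrix ι ι ℂ))
    (φ : Matrix ι ι A → Matrix ι ι B) : Prop :=
  ∀ α ∈ S, ∀ β ∈ S, ∀ P, φ (sandwich α P β) = sandwich α (φ P) β

/-! ## Noncommutative sets, functions and kernels -/

/-- A subset of the noncommutative space `V_nc`, given levelwise. -/
abbrev NCSet (V : Type*) := ∀ n : ℕ, Set (Matrix (Fin n) (Fin n) V)

/-- The type of graded kernels on all of `V_nc` with values in `L(A_nc, B_nc)`;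
a kernel "on `Ω`" is such a family, with all conditions imposed only at points of `Ω`. -/
abbrev KernelFam (V A B : Type*) :=
  ∀ n m : ℕ, Matrix (Fin n) (Fin n) V → Matrix (Fin m) (Fin m) V →
    (Matrix (Fin n) (Fin m) A → Matrix (Fin n) (Fin m) B)

/-- A graded kernel assigns a *linear* map `K(Z,W) : A^{n×m} → B^{n×m}` to points of `Ω`. -/
def GradedLinearOn {V A B : Type*} [AddCommMonoid A] [Module ℂ A] [AddCommMonoid B]
    [Module ℂ B] (Ω : NCSet V) (K : KernelFam V A B) : Prop :=
  ∀ n m Z W, Z ∈ Ω n → W ∈ Ω m → IsLinearMap ℂ (K n m Z W)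

/-- `K` respects intertwinings at points of `Ω`: whenever `α Z = Z' α` and `β W = W' β`,
`α K(Z,W)(P) β^* = K(Z',W')(α P β^*)`. -/
def IsNCKernelOn {V : Type*} [AddCommMonoid V] [Module ℂ V] {A B : Type*}
    [AddCommMonoid A] [Module ℂ A] [AddCommMonoid B] [Module ℂ B]
    (Ω : NCSet V) (K : KernelFam V A B) : Prop :=
  ∀ (n n' m m' : ℕ) (Z : Matrix (Fin n) (Fin n) V) (Z' : Matrix (Fin n') (Fin n') V)
    (W : Matrix (Fin m) (Fin m) V) (W' : Matrix (Fin m') (Fin m') V),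
    Z ∈ Ω n → Z' ∈ Ω n' → W ∈ Ω m → W' ∈ Ω m' →
    ∀ (α : Matrix (Fin n') (Fin n) ℂ) (β : Matrix (Fin m') (Fin m) ℂ),
      cMul α Z = mulC Z' α → cMul β W = mulC W' β →
      ∀ P, sandwich α (K n m Z W P) β = K n' m' Z' W' (sandwich α P β)

/-- `K` is Hermitian on `Ω`: `K(W,Z)(P^*) = (K(Z,W)(P))^*`. -/
def IsHermitianOn {V A B : Type*} [Star A] [Star B] (Ω : NCSet V) (K : KernelFam V A B) :
    Prop :=
  ∀ n m Z W, Z ∈ Ω n → W ∈ Ω m → ∀ P : Matrix (Fin n) (Fin m) A,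
    K m n W Z Pᴴ = (K n m Z W P)ᴴ

/-- The complete positivity condition for a kernel with values in `L(A_nc, L(Y)_nc)`,
in the Hilbert-space (quadratic form) formulation. -/
def IsCPOnH {V : Type*} {A : Type*} [NonUnitalSemiring A] [StarRing A]
    (Ω : NCSet V) (K : KernelFam V A (Y →L[ℂ] Y)) : Prop :=
  ∀ (L : ℕ) (ns : Fin L → ℕ) (Z : ∀ l, Matrix (Fin (ns l)) (Fin (ns l)) V),
    (∀ l, Z l ∈ Ω (ns l)) →
    ∀ (P : ∀ l, Matrix (Fin (ns l)) (Fin 1) A) (y : ∀ l, Fin (ns l) → Y),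
      0 ≤ ∑ l, ∑ l', ∑ a, ∑ b,
        (inner ℂ (y l a) (K (ns l) (ns l') (Z l) (Z l') (P l * (P l')ᴴ) a b (y l' b)) : ℂ)

/-- The complete positivity condition for a kernel with values in `L(A_nc, B_nc)`,
`B` a `C⋆`-algebra, in the `C⋆`-algebraic formulation. -/
def IsCPOnC {V : Type*} {A B : Type*} [NonUnitalSemiring A] [StarRing A]
    [NonUnitalSemiring B] [StarRing B] (Ω : NCSet V) (K : KernelFam V A B) : Prop :=
  ∀ (L : ℕ) (ns : Fin L → ℕ) (Z : ∀ l, Matrix (Fin (ns l)) (Fin (ns l)) V),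
    (∀ l, Z l ∈ Ω (ns l)) →
    ∀ (a : ∀ l, Matrix (Fin (ns l)) (Fin 1) A) (b : ∀ l, Matrix (Fin (ns l)) (Fin 1) B),
      elemPos (∑ l, ∑ l',
        ((b l)ᴴ * (K (ns l) (ns l') (Z l) (Z l') (a l * (a l')ᴴ)) * b l') 0 0)

/-- Completely positive noncommutative kernel on `Ω` (Hilbert-space-valued version). -/
def IsCPNCKernelOnH {V : Type*} [AddCommMonoid V] [Module ℂ V] {A : Type*}
    [NonUnitalSemiring A] [StarRing A] [Module ℂ A] (Ω : NCSet V)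
    (K : KernelFam V A (Y →L[ℂ] Y)) : Prop :=
  GradedLinearOn Ω K ∧ IsNCKernelOn Ω K ∧ IsCPOnH Ω K

/-- Completely positive noncommutative kernel on `Ω` (`C⋆`-algebra-valued version). -/
def IsCPNCKernelOnC {V : Type*} [AddCommMonoid V] [Module ℂ V] {A B : Type*}
    [NonUnitalSemiring A] [StarRing A] [Module ℂ A]
    [NonUnitalSemiring B] [StarRing B] [Module ℂ B] (Ω : NCSet V)
    (K : KernelFam V A B) : Prop :=
  GradedLinearOn Ω K ∧ IsNCKernelOn Ω K ∧ IsCPOnC Ω K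

/-- Noncommutative function `H` on `Ω` with values in `W_nc`:
graded, and `Z α = α Z'` implies `H(Z) (α ⊗ 1) = (α ⊗ 1) H(Z')`. -/
def IsNCFunOn {V W : Type*} [AddCommMonoid V] [Module ℂ V] [AddCommMonoid W] [Module ℂ W]
    (Ω : NCSet V) (H : ∀ n, Matrix (Fin n) (Fin n) V → Matrix (Fin n) (Fin n) W) : Prop :=
  ∀ (n m : ℕ) (Z : Matrix (Fin n) (Fin n) V) (Z' : Matrix (Fin m) (Fin m) V),
    Z ∈ Ω n → Z' ∈ Ω m → ∀ α : Matrix (Fin n) (Fin m) ℂ,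
      mulC Z α = cMul α Z' → mulC (H n Z) α = cMul α (H m Z')

/-! ## Kernels on a finite (indexed) set of points -/

/-- Kernels on a finite set of points `Z i`, `i : Fin Np`, of sizes `d i`. -/
abbrev KernelIx {Np : ℕ} (d : Fin Np → ℕ) (A B : Type*) :=
  ∀ i j : Fin Np, Matrix (Fin (d i)) (Fin (d j)) A → Matrix (Fin (d i)) (Fin (d j)) B

/-- Each value `K(Z_i, Z_j)` is a linear map. -/
def GradedLinearIx {Np : ℕ} {d : Fin Np → ℕ} {A B : Type*} [AddCommMonoid A] [Module ℂ A]
    [AddCommMonoid B] [Module ℂ B] (K : KernelIx d A B) : Prop :=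
  ∀ i j, IsLinearMap ℂ (K i j)

/-- The respects-intertwinings condition for a kernel on the finite set of points `Z`. -/
def IsNCKernelIx {V : Type*} [AddCommMonoid V] [Module ℂ V] {Np : ℕ} {d : Fin Np → ℕ}
    {A B : Type*} [AddCommMonoid A] [Module ℂ A] [AddCommMonoid B] [Module ℂ B]
    (Z : ∀ i, Matrix (Fin (d i)) (Fin (d i)) V) (K : KernelIx d A B) : Prop :=
  ∀ (i i' j j' : Fin Np) (α : Matrix (Fin (d i')) (Fin (d i)) ℂ)
    (β : Matrix (Fin (d j')) (Fin (d j)) ℂ),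
    cMul α (Z i) = mulC (Z i') α → cMul β (Z j) = mulC (Z j') β →
    ∀ P, sandwich α (K i j P) β = K i' j' (sandwich α P β)

/-- `K(Z_j, Z_i)(P^*) = (K(Z_i, Z_j)(P))^*`. -/
def IsHermitianIx {Np : ℕ} {d : Fin Np → ℕ} {A B : Type*} [Star A] [Star B]
    (K : KernelIx d A B) : Prop :=
  ∀ i j (P : Matrix (Fin (d i)) (Fin (d j)) A), K j i Pᴴ = (K i j P)ᴴ

/-- Complete positivity condition, Hilbert-space version, finite set of points. -/
def IsCPIxH {Np : ℕ} {d : Fin Np → ℕ} {A : Type*} [NonUnitalSemiring A] [StarRing A]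
    (K : KernelIx d A (Y →L[ℂ] Y)) : Prop :=
  ∀ (L : ℕ) (f : Fin L → Fin Np) (P : ∀ l, Matrix (Fin (d (f l))) (Fin 1) A)
    (y : ∀ l, Fin (d (f l)) → Y),
    0 ≤ ∑ l, ∑ l', ∑ a, ∑ b,
      (inner ℂ (y l a) (K (f l) (f l') (P l * (P l')ᴴ) a b (y l' b)) : ℂ)

/-- Complete positivity condition, `C⋆`-algebraic version, finite set of points. -/
def IsCPIxC {Np : ℕ} {d : Fin Np → ℕ} {A B : Type*} [NonUnitalSemiring A] [StarRing A]
    [NonUnitalSemiring B] [StarRing B] (K : KernelIx d A B) : Prop :=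
  ∀ (L : ℕ) (f : Fin L → Fin Np) (a : ∀ l, Matrix (Fin (d (f l))) (Fin 1) A)
    (b : ∀ l, Matrix (Fin (d (f l))) (Fin 1) B),
    elemPos (∑ l, ∑ l', ((b l)ᴴ * (K (f l) (f l') (a l * (a l')ᴴ)) * b l') 0 0)

/-- Completely positive nc kernel on a finite set of points (Hilbert version). -/
def IsCPNCKernelIxH {V : Type*} [AddCommMonoid V] [Module ℂ V] {Np : ℕ} {d : Fin Np → ℕ}
    {A : Type*} [NonUnitalSemiring A] [StarRing A] [Module ℂ A]
    (Z : ∀ i, Matrix (Fin (d i)) (Fin (d i)) V) (K : KernelIx d A (Y →L[ℂ] Y)) : Prop :=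
  GradedLinearIx K ∧ IsNCKernelIx Z K ∧ IsCPIxH K

/-- Completely positive nc kernel on a finite set of points (`C⋆` version). -/
def IsCPNCKernelIxC {V : Type*} [AddCommMonoid V] [Module ℂ V] {Np : ℕ} {d : Fin Np → ℕ}
    {A B : Type*} [NonUnitalSemiring A] [StarRing A] [Module ℂ A]
    [NonUnitalSemiring B] [StarRing B] [Module ℂ B]
    (Z : ∀ i, Matrix (Fin (d i)) (Fin (d i)) V) (K : KernelIx d A B) : Prop :=
  GradedLinearIx K ∧ IsNCKernelIx Z K ∧ IsCPIxC K

/-! ## The block-matrix encoding of a kernel on a finite set of points -/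

/-- The block index set for the direct sum point `Z^{(0)} = ⊕ᵢ Z_i`. -/
abbrev BIx {Np : ℕ} (d : Fin Np → ℕ) : Type := Σ i : Fin Np, Fin (d i)

/-- The direct sum `Z^{(0)} = ⊕ᵢ Z_i` of a finite family of nc points. -/
def dirSum {V : Type*} [Zero V] {Np : ℕ} {d : Fin Np → ℕ}
    (Z : ∀ i, Matrix (Fin (d i)) (Fin (d i)) V) : Matrix (BIx d) (BIx d) V :=
  Matrix.of fun x y =>
    if h : x.1 = y.1 then Z x.1 x.2 (Fin.cast (congrArg d h.symm) y.2) else 0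

/-- The intertwining algebra `S = {α : α Z^{(0)} = Z^{(0)} α}` of the direct-sum point. -/
def interAlg {V : Type*} [AddCommMonoid V] [Module ℂ V] {Np : ℕ} {d : Fin Np → ℕ}
    (Z : ∀ i, Matrix (Fin (d i)) (Fin (d i)) V) : Set (Matrix (BIx d) (BIx d) ℂ) :=
  {α | cMul α (dirSum Z) = mulC (dirSum Z) α}

/-- The block map `φ_K ([P_{ij}]) = [K(Z_i,Z_j)(P_{ij})]` associated with a kernel on a
finite set of points. -/
def phiK {Np : ℕ} {d : Fin Np → ℕ} {A B : Type*} (K : KernelIx d A B) :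
    Matrix (BIx d) (BIx d) A → Matrix (BIx d) (BIx d) B :=
  fun P => Matrix.of fun x y =>
    K x.1 y.1 (Matrix.of fun a b => P ⟨x.1, a⟩ ⟨y.1, b⟩) x.2 y.2

/-- The block map associated with a kernel and a finite tuple `f` of (indices of) points. -/
def phiKt {Np : ℕ} {d : Fin Np → ℕ} {A B : Type*} {L : ℕ} (f : Fin L → Fin Np)
    (K : KernelIx d A B) :
    Matrix (Σ l, Fin (d (f l))) (Σ l, Fin (d (f l))) A →
      Matrix (Σ l, Fin (d (f l))) (Σ l, Fin (d (f l))) B :=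
  fun P => Matrix.of fun x y =>
    K (f x.1) (f y.1) (Matrix.of fun a b => P ⟨x.1, a⟩ ⟨y.1, b⟩) x.2 y.2

/-- The block map associated with a general kernel and a finite tuple of points. -/
def phiKg {V A B : Type*} (K : KernelFam V A B) {L : ℕ} (ns : Fin L → ℕ)
    (Z : ∀ l, Matrix (Fin (ns l)) (Fin (ns l)) V) :
    Matrix (Σ l, Fin (ns l)) (Σ l, Fin (ns l)) A →
      Matrix (Σ l, Fin (ns l)) (Σ l, Fin (ns l)) B :=
  fun P => Matrix.of fun x y =>
    K (ns x.1) (ns y.1) (Z x.1) (Z y.1) (Matrix.of fun a b => P ⟨x.1, a⟩ ⟨y.1, b⟩) x.2 y.2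

/-! ## Full nc sets and envelopes -/

/-- Direct sum of two nc points. -/
def dsum2 {V : Type*} [Zero V] {n m : ℕ} (Z : Matrix (Fin n) (Fin n) V)
    (W : Matrix (Fin m) (Fin m) V) : Matrix (Fin (n + m)) (Fin (n + m)) V :=
  Matrix.of fun i j =>
    Sum.elim
      (fun a => Sum.elim (fun b => Z a b) (fun _ => (0 : V)) (finSumFinEquiv.symm j))
      (fun a => Sum.elim (fun _ => (0 : V)) (fun b => W a b) (finSumFinEquiv.symm j))
      (finSumFinEquiv.symm i)

/-- A full nc set: closed under direct sums and invariant under left injective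
intertwinings. -/
def IsFullNC {V : Type*} [AddCommMonoid V] [Module ℂ V] (Ξ : NCSet V) : Prop :=
  (∀ (n m : ℕ) (Z : Matrix (Fin n) (Fin n) V) (W : Matrix (Fin m) (Fin m) V),
      Z ∈ Ξ n → W ∈ Ξ m → dsum2 Z W ∈ Ξ (n + m)) ∧
  (∀ (n m : ℕ) (Z : Matrix (Fin n) (Fin n) V) (Z' : Matrix (Fin m) (Fin m) V)
      (ι : Matrix (Fin n) (Fin m) ℂ), Z ∈ Ξ n → Function.Injective ι.mulVec →
      cMul ι Z' = mulC Z ι → Z' ∈ Ξ m)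

/-- The full nc envelope of a subset `Ω` of `V_nc`. -/
def fullEnvelope {V : Type*} [AddCommMonoid V] [Module ℂ V] (Ω : NCSet V) : NCSet V :=
  fun n => {Z | ∀ Ξ : NCSet V, IsFullNC Ξ → (∀ k, Ω k ⊆ Ξ k) → Z ∈ Ξ n}

/-! ## 2×2 operator blocks -/

/-- A `2 × 2` matrix of operators on `Y`, as an operator on `Y ⊕ Y` (ℓ²-sum). -/
def blk2 (T : Matrix (Fin 2) (Fin 2) (Y →L[ℂ] Y)) :
    (PiLp 2 fun _ : Fin 2 => Y) →L[ℂ] (PiLp 2 fun _ : Fin 2 => Y) :=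
  ((PiLp.continuousLinearEquiv 2 ℂ (fun _ : Fin 2 => Y)).symm.toContinuousLinearMap) ∘L
    ((ContinuousLinearMap.pi fun i => ∑ j, (T i j) ∘L (ContinuousLinearMap.proj j)) ∘L
      ((PiLp.continuousLinearEquiv 2 ℂ (fun _ : Fin 2 => Y)).toContinuousLinearMap))


/-- Complete positivity for a map `φ : A → L(Y)` defined on a `C⋆`-algebra `A`. -/
def IsCPMapE {A : Type*} [NonUnitalSemiring A] [StarRing A] (φ : A → (Y →L[ℂ] Y)) : Prop :=
  ∀ (k : ℕ) (Q : Matrix (Fin k) (Fin k) A), MatPos Q →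
    OpMatPos (Matrix.of fun i j => φ (Q i j))

/-- Complete boundedness for a map `φ : A → L(Y)` defined on a `C⋆`-algebra `A`. -/
def IsCBMapE {A : Type*} [Ring A] [StarRing A] [Algebra ℂ A] (φ : A → (Y →L[ℂ] Y)) : Prop :=
  ∃ c : ℝ, ∀ (k : ℕ) (Q : Matrix (Fin k) (Fin k) A),
    MatNormLe Q 1 → OpMatNormLe (Matrix.of fun i j => φ (Q i j)) c

/-- The strict positivity domain `ℙ_𝔔 = {Z ∈ Ξ : 𝔔(Z,Z)(I) ≻ 0}` of a kernel `𝔔` on `Ξ`. -/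
def posDom {V : Type*} {N : Type*} [NormedAddCommGroup N] [InnerProductSpace ℂ N]
    [CompleteSpace N] (Ξ : NCSet V) (Q : KernelFam V ℂ (N →L[ℂ] N)) : NCSet V :=
  fun n => {Z | Z ∈ Ξ n ∧ ∃ ε : ℝ, 0 < ε ∧
    MatPos (Q n n Z Z 1 - (ε : ℂ) • (1 : Matrix (Fin n) (Fin n) (N →L[ℂ] N)))}


/-! ### Auxiliary lemmas for Statement 8 -/

section Aux

variable {Y : Type*} [NormedAddCommGroup Y] [InnerProductSpace ℂ Y]

lemma aux_sandwich_add {p q p' q' : Type*} [Fintype p] [Fintype q] {M : Type*}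
    [AddCommMonoid M] [Module ℂ M] (α : Matrix p' p ℂ) (P Q : Matrix p q M)
    (β : Matrix q' q ℂ) :
    sandwich α (P + Q) β = sandwich α P β + sandwich α Q β := by
  ext i k
  simp [sandwich, cMul, mulC, smul_add, Finset.sum_add_distrib]

lemma aux_sandwich_smul {p q p' q' : Type*} [Fintype p] [Fintype q] {M : Type*}
    [AddCommMonoid M] [Module ℂ M] (α : Matrix p' p ℂ) (c : ℂ) (P : Matrix p q M)
    (β : Matrix q' q ℂ) :
    sandwich α (c • P) β = c • sandwich α P β := by
  ext i k
  simp [sandwich, cMul, mulC, smul_comm c, Finset.smul_sum]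

lemma aux_sandwich_sub {p q p' q' : Type*} [Fintype p] [Fintype q] {M : Type*}
    [AddCommGroup M] [Module ℂ M] (α : Matrix p' p ℂ) (P Q : Matrix p q M)
    (β : Matrix q' q ℂ) :
    sandwich α (P - Q) β = sandwich α P β - sandwich α Q β := by
  ext i k
  simp [sandwich, cMul, mulC, smul_sub, Finset.sum_sub_distrib]

lemma aux_piLp_apply_add (x y : PiLp 2 fun _ : Fin 2 => Y) (t : Fin 2) :
    (x + y) t = x t + y t := rfl

lemma aux_piLp_apply_sum {ι : Type*} (s : Finset ι) (f : ι → PiLp 2 fun _ : Fin 2 => Y)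
    (t : Fin 2) : (∑ i ∈ s, f i) t = ∑ i ∈ s, f i t := by
  rw [WithLp.ofLp_sum, Finset.sum_apply]

lemma aux_piLp_apply_smul (c : ℂ) (x : PiLp 2 fun _ : Fin 2 => Y) (t : Fin 2) :
    (c • x) t = c • x t := rfl

lemma aux_blk2_apply (T : Matrix (Fin 2) (Fin 2) (Y →L[ℂ] Y))
    (x : PiLp 2 fun _ : Fin 2 => Y) (s : Fin 2) :
    blk2 T x s = ∑ t, T s t (x t) := by
  simp [blk2, ContinuousLinearMap.sum_apply]

lemma aux_inner_blk2 (a b c d : Y →L[ℂ] Y) (x z : PiLp 2 fun _ : Fin 2 => Y) :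
    (inner ℂ x (blk2 !![a, b; c, d] z) : ℂ)
      = inner ℂ (x 0) (a (z 0)) + inner ℂ (x 0) (b (z 1))
        + inner ℂ (x 1) (c (z 0)) + inner ℂ (x 1) (d (z 1)) := by
  simp [PiLp.inner_apply, aux_blk2_apply, Fin.sum_univ_two, inner_add_right]
  ring

lemma aux_sandwich_blk2 {p q p' q' : Type*} [Fintype p] [Fintype q]
    (α : Matrix p' p ℂ) (β : Matrix q' q ℂ) (a b c d : Matrix p q (Y →L[ℂ] Y)) :
    sandwich α (Matrix.of fun i j => blk2 !![a i j, b i j; c i j, d i j]) β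
      = Matrix.of fun i j => blk2 !![sandwich α a β i j, sandwich α b β i j;
          sandwich α c β i j, sandwich α d β i j] := by
  ext i k x s
  simp only [sandwich, cMul, mulC, Matrix.of_apply]
  fin_cases s <;>
    simp [aux_blk2_apply, Fin.sum_univ_two, smul_add, Finset.sum_add_distrib,
      aux_piLp_apply_sum, aux_piLp_apply_smul, ContinuousLinearMap.sum_apply,
      ContinuousLinearMap.smul_apply]

lemma aux_key1 (T₁ T₂ : Y →L[ℂ] Y) (x z : PiLp 2 fun _ : Fin 2 => Y) :
    (inner ℂ x (blk2 !![T₁ + T₂, T₁ - T₂; T₁ - T₂, T₁ + T₂] z) : ℂ)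
      = inner ℂ (x 0 + x 1) (T₁ (z 0 + z 1)) + inner ℂ (x 0 - x 1) (T₂ (z 0 - z 1)) := by
  simp only [aux_inner_blk2, ContinuousLinearMap.add_apply, ContinuousLinearMap.sub_apply,
    map_add, map_sub, inner_add_left, inner_add_right, inner_sub_left, inner_sub_right]
  ring

/-- The pair `(x, y)` as an element of the `ℓ²`-sum `Y ⊕ Y`. -/
def aux_pair (x y : Y) : PiLp 2 fun _ : Fin 2 => Y :=
  (WithLp.equiv 2 (∀ _ : Fin 2, Y)).symm ![x, y]

@[simp] lemma aux_pair_zero (x y : Y) : aux_pair x y 0 = x := rfl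
@[simp] lemma aux_pair_one (x y : Y) : aux_pair x y 1 = y := rfl

lemma aux_key2 (T₁ T₂ T₃ : Y →L[ℂ] Y) (x z : Y) :
    (inner ℂ (aux_pair ((1/2 : ℂ) • x) ((1/2 : ℂ) • x))
        (blk2 !![T₁, T₃; T₃, T₂] (aux_pair ((1/2 : ℂ) • z) ((1/2 : ℂ) • z))) : ℂ)
      = inner ℂ x ((((1/4 : ℂ) • (T₁ + T₂) + (1/2 : ℂ) • T₃)) z) := by
  simp only [aux_inner_blk2, aux_pair_zero, aux_pair_one, map_smul, inner_smul_left,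
    inner_smul_right, ContinuousLinearMap.add_apply, ContinuousLinearMap.smul_apply,
    map_add, inner_add_right, smul_smul]
  simp [starRingEnd_apply]
  ring

lemma aux_key3 (T₁ T₂ T₃ : Y →L[ℂ] Y) (x z : Y) :
    (inner ℂ (aux_pair ((1/2 : ℂ) • x) (-((1/2 : ℂ) • x)))
        (blk2 !![T₁, T₃; T₃, T₂] (aux_pair ((1/2 : ℂ) • z) (-((1/2 : ℂ) • z)))) : ℂ)
      = inner ℂ x ((((1/4 : ℂ) • (T₁ + T₂) - (1/2 : ℂ) • T₃)) z) := by
  simp only [aux_inner_blk2, aux_pair_zero, aux_pair_one, map_smul, map_neg,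
    inner_smul_left, inner_smul_right, inner_neg_left, inner_neg_right,
    ContinuousLinearMap.add_apply, ContinuousLinearMap.sub_apply,
    ContinuousLinearMap.smul_apply, map_add, inner_add_right, inner_sub_right, smul_smul]
  simp [starRingEnd_apply]
  ring

end Aux

/-- Proposition 3.2, (1) ⇔ (3): a Hermitian noncommutative kernel `K`
on `Ω ⊆ V_nc` with values in `L(A_nc, L(Y)_nc)` is decomposable if and only if there are
completely positive nc kernels `L₁, L₂` such that the `2×2`-block kernel
`𝕂 = [[L₁, K], [K, L₂]]`, with values in `L(A_nc, L(Y ⊕ Y)_nc)`, is a completely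
positive nc kernel. -/
theorem statement8 {V : Type*} [AddCommGroup V] [Module ℂ V]
    {A : Type*} [CStarAlgebra A]
    {Y : Type*} [NormedAddCommGroup Y] [InnerProductSpace ℂ Y] [CompleteSpace Y]
    (Ω : NCSet V) (K : KernelFam V A (Y →L[ℂ] Y))
    (hgl : GradedLinearOn Ω K) (hnc : IsNCKernelOn Ω K) (hherm : IsHermitianOn Ω K) :
    (∃ K₁ K₂ : KernelFam V A (Y →L[ℂ] Y),
        IsCPNCKernelOnH Ω K₁ ∧ IsCPNCKernelOnH Ω K₂ ∧
        ∀ (n m : ℕ) (Z : Matrix (Fin n) (Fin n) V) (W : Matrix (Fin m) (Fin m) V),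
          Z ∈ Ω n → W ∈ Ω m → ∀ P : Matrix (Fin n) (Fin m) A,
            K n m Z W P = K₁ n m Z W P - K₂ n m Z W P) ↔
    (∃ L₁ L₂ : KernelFam V A (Y →L[ℂ] Y),
        IsCPNCKernelOnH Ω L₁ ∧ IsCPNCKernelOnH Ω L₂ ∧
        IsCPNCKernelOnH Ω
          (fun n m Z W (P : Matrix (Fin n) (Fin m) A) => Matrix.of fun i j =>
            blk2 !![L₁ n m Z W P i j, K n m Z W P i j;
                     K n m Z W P i j, L₂ n m Z W P i j])) := by
  constructor
  · rintro ⟨K₁, K₂, ⟨h1l, h1n, h1c⟩, ⟨h2l, h2n, h2c⟩, hK⟩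
    have hsum : IsCPNCKernelOnH Ω (fun n m Z W P => K₁ n m Z W P + K₂ n m Z W P) := by
      refine ⟨?_, ?_, ?_⟩
      · intro n m Z W hZ hW
        exact ⟨fun P Q => by
            beta_reduce
            rw [(h1l n m Z W hZ hW).map_add, (h2l n m Z W hZ hW).map_add]; abel,
          fun c P => by
            beta_reduce
            rw [(h1l n m Z W hZ hW).map_smul, (h2l n m Z W hZ hW).map_smul, smul_add]⟩
      · intro n n' m m' Z Z' W W' hZ hZ' hW hW' α β hα hβ P
        beta_reduce
        rw [aux_sandwich_add, h1n n n' m m' Z Z' W W' hZ hZ' hW hW' α β hα hβ P,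
          h2n n n' m m' Z Z' W W' hZ hZ' hW hW' α β hα hβ P]
      · intro L ns Zf hZf P y
        beta_reduce
        have h1 := h1c L ns Zf hZf P y
        have h2 := h2c L ns Zf hZf P y
        calc (0:ℂ) ≤ _ + _ := add_nonneg h1 h2
          _ = _ := by
            rw [← Finset.sum_add_distrib]
            refine Finset.sum_congr rfl fun l _ => ?_
            rw [← Finset.sum_add_distrib]
            refine Finset.sum_congr rfl fun l' _ => ?_
            rw [← Finset.sum_add_distrib]
            refine Finset.sum_congr rfl fun a _ => ?_
            rw [← Finset.sum_add_distrib]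
            refine Finset.sum_congr rfl fun b _ => ?_
            simp [Matrix.add_apply, ContinuousLinearMap.add_apply, inner_add_right]
    refine ⟨_, _, hsum, hsum, ?_, ?_, ?_⟩
    · intro n m Z W hZ hW
      have e0 := hgl n m Z W hZ hW
      have e1 := h1l n m Z W hZ hW
      have e2 := h2l n m Z W hZ hW
      constructor
      · intro P Q
        beta_reduce
        ext i j x s
        fin_cases s <;>
          simp [aux_blk2_apply, Fin.sum_univ_two, e0.map_add, e1.map_add, e2.map_add,
            Matrix.add_apply, ContinuousLinearMap.add_apply, aux_piLp_apply_add] <;>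
          abel
      · intro c P
        beta_reduce
        ext i j x s
        fin_cases s <;>
          simp [aux_blk2_apply, Fin.sum_univ_two, e0.map_smul, e1.map_smul, e2.map_smul,
            Matrix.smul_apply, ContinuousLinearMap.smul_apply, aux_piLp_apply_smul,
            smul_add] <;>
          module
    · intro n n' m m' Z Z' W W' hZ hZ' hW hW' α β hα hβ P
      have e1 : sandwich α (K₁ n m Z W P + K₂ n m Z W P) β
          = K₁ n' m' Z' W' (sandwich α P β) + K₂ n' m' Z' W' (sandwich α P β) := by
        rw [aux_sandwich_add, h1n n n' m m' Z Z' W W' hZ hZ' hW hW' α β hα hβ P,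
          h2n n n' m m' Z Z' W W' hZ hZ' hW hW' α β hα hβ P]
      have e2 := hnc n n' m m' Z Z' W W' hZ hZ' hW hW' α β hα hβ P
      beta_reduce
      rw [aux_sandwich_blk2]
      simp only [e1, e2]
    · intro L ns Zf hZf P y
      beta_reduce
      have hK' : ∀ l l' : Fin L, K (ns l) (ns l') (Zf l) (Zf l') (P l * (P l')ᴴ)
          = K₁ (ns l) (ns l') (Zf l) (Zf l') (P l * (P l')ᴴ)
            - K₂ (ns l) (ns l') (Zf l) (Zf l') (P l * (P l')ᴴ) :=
        fun l l' => hK _ _ _ _ (hZf l) (hZf l') _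
      have h1 := h1c L ns Zf hZf P (fun l a => y l a 0 + y l a 1)
      have h2 := h2c L ns Zf hZf P (fun l a => y l a 0 - y l a 1)
      calc (0:ℂ) ≤ _ + _ := add_nonneg h1 h2
        _ = _ := by
          rw [← Finset.sum_add_distrib]
          refine Finset.sum_congr rfl fun l _ => ?_
          rw [← Finset.sum_add_distrib]
          refine Finset.sum_congr rfl fun l' _ => ?_
          rw [← Finset.sum_add_distrib]
          refine Finset.sum_congr rfl fun a _ => ?_
          rw [← Finset.sum_add_distrib]
          refine Finset.sum_congr rfl fun b _ => ?_
          simp only [Matrix.of_apply, hK' l l', Matrix.add_apply, Matrix.sub_apply]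
          exact (aux_key1 _ _ _ _).symm
  · rintro ⟨L₁, L₂, ⟨hl1l, hl1n, hl1c⟩, ⟨hl2l, hl2n, hl2c⟩, ⟨hKl, hKn, hKc⟩⟩
    refine ⟨(fun n m Z W P =>
        (1/4 : ℂ) • (L₁ n m Z W P + L₂ n m Z W P) + (1/2 : ℂ) • K n m Z W P),
      (fun n m Z W P =>
        (1/4 : ℂ) • (L₁ n m Z W P + L₂ n m Z W P) - (1/2 : ℂ) • K n m Z W P),
      ⟨?_, ?_, ?_⟩, ⟨?_, ?_, ?_⟩, ?_⟩
    · intro n m Z W hZ hW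
      have e0 := hgl n m Z W hZ hW
      have e1 := hl1l n m Z W hZ hW
      have e2 := hl2l n m Z W hZ hW
      exact ⟨fun P Q => by
          beta_reduce
          rw [e0.map_add, e1.map_add, e2.map_add]; module,
        fun c P => by
          beta_reduce
          rw [e0.map_smul, e1.map_smul, e2.map_smul]; module⟩
    · intro n n' m m' Z Z' W W' hZ hZ' hW hW' α β hα hβ P
      beta_reduce
      rw [aux_sandwich_add, aux_sandwich_smul, aux_sandwich_smul, aux_sandwich_add,
        hl1n n n' m m' Z Z' W W' hZ hZ' hW hW' α β hα hβ P,
        hl2n n n' m m' Z Z' W W' hZ hZ' hW hW' α β hα hβ P,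
        hnc n n' m m' Z Z' W W' hZ hZ' hW hW' α β hα hβ P]
    · intro L ns Zf hZf P w
      beta_reduce
      have h := hKc L ns Zf hZf P
        (fun l a => aux_pair ((1/2 : ℂ) • w l a) ((1/2 : ℂ) • w l a))
      refine h.trans_eq ?_
      refine Finset.sum_congr rfl fun l _ => ?_
      refine Finset.sum_congr rfl fun l' _ => ?_
      refine Finset.sum_congr rfl fun a _ => ?_
      refine Finset.sum_congr rfl fun b _ => ?_
      simp only [Matrix.of_apply, Matrix.add_apply, Matrix.smul_apply]
      exact aux_key2 _ _ _ _ _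
    · intro n m Z W hZ hW
      have e0 := hgl n m Z W hZ hW
      have e1 := hl1l n m Z W hZ hW
      have e2 := hl2l n m Z W hZ hW
      exact ⟨fun P Q => by
          beta_reduce
          rw [e0.map_add, e1.map_add, e2.map_add]; module,
        fun c P => by
          beta_reduce
          rw [e0.map_smul, e1.map_smul, e2.map_smul]; module⟩
    · intro n n' m m' Z Z' W W' hZ hZ' hW hW' α β hα hβ P
      beta_reduce
      rw [aux_sandwich_sub, aux_sandwich_smul, aux_sandwich_smul, aux_sandwich_add,
        hl1n n n' m m' Z Z' W W' hZ hZ' hW hW' α β hα hβ P,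
        hl2n n n' m m' Z Z' W W' hZ hZ' hW hW' α β hα hβ P,
        hnc n n' m m' Z Z' W W' hZ hZ' hW hW' α β hα hβ P]
    · intro L ns Zf hZf P w
      beta_reduce
      have h := hKc L ns Zf hZf P
        (fun l a => aux_pair ((1/2 : ℂ) • w l a) (-((1/2 : ℂ) • w l a)))
      refine h.trans_eq ?_
      refine Finset.sum_congr rfl fun l _ => ?_
      refine Finset.sum_congr rfl fun l' _ => ?_
      refine Finset.sum_congr rfl fun a _ => ?_
      refine Finset.sum_congr rfl fun b _ => ?_
      simp only [Matrix.of_apply, Matrix.sub_apply, Matrix.add_apply, Matrix.smul_apply]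
      exact aux_key3 _ _ _ _ _
    · intro n m Z W hZ hW P
      beta_reduce
      module


end NCK

end
end

section
/- Let S be a subalgebra of ℂ^{M×M} and let φ : A^{M×M} → L(Y^M) be an (S,S*)-bimodule map admitting a Hermitian Stinespring representation: φ(P) = V(π(P)J)V* for all P ∈ A^{M×M}, where π : A^{M×M} → L(X) is a unital *-representation on a Hilbert space X, V ∈ L(X, Y^M), and J ∈ L(X) satisfies J = J* = J^{-1} and Jπ(P) = π(P)J for all P. Then the subspace span_{β ∈ S} Ran(π(β*·1_A)V* − V*L_{β*}) of X is J-isotropic; that is, for all β, β' ∈ S and y, y' ∈ Y^M, ⟨J(π(β*·1_A)V* − V*L_{β*})y, (π(β'*·1_A)V* − V*L_{β'*})y'⟩ = 0. -/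
open scoped ComplexOrder Matrix

noncomputable section

namespace NCK

variable {Y : Type*} [NormedAddCommGroup Y] [InnerProductSpace ℂ Y]

section Statement15Aux

set_option linter.unusedSectionVars false

variable {M : ℕ} {A : Type*} [Ring A] [StarRing A] [Algebra ℂ A] [StarModule ℂ A]

lemma matC_one : matC A (1 : Matrix (Fin M) (Fin M) ℂ) = 1 := by
  ext i j
  simp [matC, Matrix.one_apply, apply_ite (algebraMap ℂ A)]

lemma matC_mul (β γ : Matrix (Fin M) (Fin M) ℂ) :
    matC A (β * γ) = matC A β * matC A γ := by
  ext i j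
  simp [matC, Matrix.mul_apply, map_sum]

lemma matC_conjT (β : Matrix (Fin M) (Fin M) ℂ) : matC A βᴴ = (matC A β)ᴴ := by
  ext i j
  simp only [matC, Matrix.conjTranspose_apply, Matrix.map_apply]
  exact algebraMap_star_comm _

lemma sand_one (γ β' : Matrix (Fin M) (Fin M) ℂ) :
    sandwich γ (1 : Matrix (Fin M) (Fin M) A) β' = matC A (γ * β'ᴴ) := by
  ext i j
  simp [sandwich, cMul, mulC, matC, Matrix.mul_apply, Matrix.one_apply, smul_ite,
    Finset.sum_ite_eq, Algebra.algebraMap_eq_smul_one, map_sum, smul_smul, mul_comm]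

lemma sand_idr (γ : Matrix (Fin M) (Fin M) ℂ) (P : Matrix (Fin M) (Fin M) A) :
    sandwich γ P (1 : Matrix (Fin M) (Fin M) ℂ) = cMul γ P := by
  ext i j
  simp [sandwich, mulC, Matrix.one_apply, smul_ite, Finset.sum_ite_eq]

end Statement15Aux

/-- Theorem 3.10(2): if the `(S,S^*)`-bimodule map `φ` has a Hermitian
Stinespring representation `φ(P) = V (π(P) J) V^*`, then the span of the ranges of the
operators `π(β^* ⊗ 1_A) V^* - V^* L_{β^*}` (`β ∈ S`) is a `J`-isotropic subspace of `X`: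
all `J`-pairings between such vectors vanish. -/
theorem statement15 {M : ℕ} (S : Subalgebra ℂ (Matrix (Fin M) (Fin M) ℂ))
    {A : Type*} [CStarAlgebra A]
    {Y : Type*} [NormedAddCommGroup Y] [InnerProductSpace ℂ Y] [CompleteSpace Y]
    {X : Type*} [NormedAddCommGroup X] [InnerProductSpace ℂ X] [CompleteSpace X]
    (π : Matrix (Fin M) (Fin M) A →⋆ₐ[ℂ] (X →L[ℂ] X)) (Vc : Fin M → (X →L[ℂ] Y))
    (J : X →L[ℂ] X) (hJstar : star J = J) (hJinv : J ∘L J = ContinuousLinearMap.id ℂ X)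
    (hJcomm : ∀ P, J ∘L (π P) = (π P) ∘L J)
    (φ : Matrix (Fin M) (Fin M) A → Matrix (Fin M) (Fin M) (Y →L[ℂ] Y))
    (hrep : ∀ P, φ P = Matrix.of fun i j =>
      (Vc i) ∘L ((π P) ∘L (J ∘L (ContinuousLinearMap.adjoint (Vc j)))))
    (hbm : IsBimod (S : Set (Matrix (Fin M) (Fin M) ℂ)) φ) :
    ∀ β ∈ S, ∀ β' ∈ S, ∀ y y' : Fin M → Y,
      (inner ℂ
        (J ((π (matC A βᴴ)) (∑ j, ContinuousLinearMap.adjoint (Vc j) (y j)) -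
          ∑ k, ∑ l, (starRingEnd ℂ) (β l k) • ContinuousLinearMap.adjoint (Vc k) (y l)))
        ((π (matC A β'ᴴ)) (∑ j, ContinuousLinearMap.adjoint (Vc j) (y' j)) -
          ∑ k, ∑ l, (starRingEnd ℂ) (β' l k) • ContinuousLinearMap.adjoint (Vc k) (y' l))
        : ℂ) = 0 := by
  intro β hβ β' hβ' y y'
  classical
  set u : X := ∑ j, ContinuousLinearMap.adjoint (Vc j) (y j) with hu
  set u' : X := ∑ j, ContinuousLinearMap.adjoint (Vc j) (y' j) with hu'
  set s : X := ∑ k, ∑ l, (starRingEnd ℂ) (β l k) • ContinuousLinearMap.adjoint (Vc k) (y l)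
    with hs
  set s' : X := ∑ k, ∑ l, (starRingEnd ℂ) (β' l k) • ContinuousLinearMap.adjoint (Vc k) (y' l)
    with hs'
  have hJs : ∀ x z : X, (inner ℂ (J x) z : ℂ) = inner ℂ x (J z) := by
    have hJa : ContinuousLinearMap.adjoint J = J := by
      rw [← ContinuousLinearMap.star_eq_adjoint, hJstar]
    intro x z
    conv_lhs => rw [← hJa]
    rw [ContinuousLinearMap.adjoint_inner_left]
  have hcomm : ∀ (Q : Matrix (Fin M) (Fin M) A) (x : X), J ((π Q) x) = (π Q) (J x) := by
    intro Q x
    exact ContinuousLinearMap.ext_iff.mp (hJcomm Q) x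
  have hπs : ∀ (Q : Matrix (Fin M) (Fin M) A) (x z : X),
      (inner ℂ ((π Q) x) z : ℂ) = inner ℂ x ((π Qᴴ) z) := by
    intro Q x z
    have hπa : ContinuousLinearMap.adjoint (π Q) = π Qᴴ := by
      rw [← ContinuousLinearMap.star_eq_adjoint, ← Matrix.star_eq_conjTranspose, map_star]
    rw [← ContinuousLinearMap.adjoint_inner_right, hπa]
  have hVφ : ∀ (P : Matrix (Fin M) (Fin M) A) (m j : Fin M) (z : Y),
      (Vc m) ((π P) (J ((ContinuousLinearMap.adjoint (Vc j)) z))) = (φ P) m j z := by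
    intro P m j z
    rw [hrep]
    rfl
  have hφγ : ∀ γ ∈ S, φ (matC A γ) = cMul γ (φ 1) := by
    intro γ hγ
    have h := hbm γ hγ 1 S.one_mem (1 : Matrix (Fin M) (Fin M) A)
    rw [sand_one, sand_idr, Matrix.conjTranspose_one, mul_one] at h
    exact h
  have hker : ∀ γ ∈ S, ∀ m : Fin M,
      (Vc m) ((π (matC A γ)) (J ((π (matC A β'ᴴ)) u' - s'))) = 0 := by
    intro γ hγ m
    rw [map_sub, map_sub, map_sub, sub_eq_zero]
    have hA : (Vc m) ((π (matC A γ)) (J ((π (matC A β'ᴴ)) u'))) =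
        ∑ j, ((sandwich γ (φ 1) β') m j) (y' j) := by
      have h1 : (π (matC A γ)) (J ((π (matC A β'ᴴ)) u'))
          = (π (matC A (γ * β'ᴴ))) (J u') := by
        rw [hcomm, matC_mul, map_mul]
        rfl
      rw [h1, hu']
      simp only [map_sum]
      refine Finset.sum_congr rfl fun j _ => ?_
      rw [hVφ, ← sand_one, hbm γ hγ β' hβ' 1]
    have hB : (Vc m) ((π (matC A γ)) (J s')) =
        ∑ k, ∑ l, (starRingEnd ℂ) (β' l k) • ((cMul γ (φ 1)) m k) (y' l) := by
      rw [hs']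
      simp only [map_sum, map_smul]
      refine Finset.sum_congr rfl fun k _ => Finset.sum_congr rfl fun l _ => ?_
      rw [hVφ, hφγ γ hγ]
    rw [hA, hB]
    simp only [sandwich, mulC, Matrix.of_apply, Matrix.conjTranspose_apply,
      ContinuousLinearMap.sum_apply, ContinuousLinearMap.smul_apply, starRingEnd_apply]
    exact Finset.sum_comm
  have h0 : ∀ k, (Vc k) (J ((π (matC A β'ᴴ)) u' - s')) = 0 := by
    intro k
    have h := hker 1 S.one_mem k
    rwa [matC_one, map_one, ContinuousLinearMap.one_apply] at h
  rw [hJs, inner_sub_left]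
  have hua : (inner ℂ ((π (matC A βᴴ)) u) (J ((π (matC A β'ᴴ)) u' - s')) : ℂ) = 0 := by
    rw [hπs, matC_conjT, Matrix.conjTranspose_conjTranspose, hu, sum_inner]
    refine Finset.sum_eq_zero fun i _ => ?_
    rw [ContinuousLinearMap.adjoint_inner_left, hker β hβ i, inner_zero_right]
  have hsa : (inner ℂ s (J ((π (matC A β'ᴴ)) u' - s')) : ℂ) = 0 := by
    rw [hs]
    simp only [sum_inner, inner_smul_left]
    refine Finset.sum_eq_zero fun k _ => Finset.sum_eq_zero fun l _ => ?_
    rw [ContinuousLinearMap.adjoint_inner_left, h0 k, inner_zero_right, mul_zero]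
  rw [hua, hsa, sub_zero]

end NCK

end
end
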